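/- Otter's dissimilarity characteristic for trees: for any tree T, the number of dissimilarity classes of vertices minus the number of dissimilarity classes of edges that are not symmetric equals 1, where an edge is symmetric if some automorphism of T swaps its endpoints. -/

import Mathlib

/-- The collection of similarity (dissimilarity) classes of vertices of `G`:
the orbits of the automorphism group acting on vertices. -/
def vertexOrbits {V : Type*} (G : SimpleGraph V) : Set (Set V) :=
  Set.range fun v : V => {w : V | ∃ φ : G ≃g G, φ v = w}

/-- An edge `e` of `G` is symmetric if some automorphism swaps its endpoints. -/
def IsSymmetricEdge {V : Type*} (G : SimpleGraph V) (e : Sym2 V) : Prop :=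
  ∃ (φ : G ≃g G) (u v : V), e = s(u, v) ∧ φ u = v ∧ φ v = u

/-- The collection of similarity classes of non-symmetric edges of `G`:
the orbits of the automorphism group on edges that are not symmetric. -/
def nonSymmetricEdgeOrbits {V : Type*} (G : SimpleGraph V) : Set (Set (Sym2 V)) :=
  (fun e : Sym2 V => {e' : Sym2 V | ∃ φ : G ≃g G, Sym2.map (⇑φ) e = e'}) ''
    {e ∈ G.edgeSet | ¬ IsSymmetricEdge G e}

section OtterAux

open SimpleGraph Walk

set_option linter.unusedSectionVars false
set_option maxHeartbeats 1000000

namespace OtterProof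


variable {V : Type*} [Fintype V] {G : SimpleGraph V}

/-- Eccentricity of a vertex. -/
noncomputable def ecc (G : SimpleGraph V) (v : V) : ℕ :=
  Finset.univ.sup (fun w => G.dist v w)

lemma dist_le_ecc (v w : V) : G.dist v w ≤ ecc G v :=
  Finset.le_sup (Finset.mem_univ w)

lemma exists_ecc [Nonempty V] (v : V) : ∃ w, ecc G v = G.dist v w := by
  obtain ⟨w, _, hw⟩ := Finset.exists_mem_eq_sup Finset.univ Finset.univ_nonempty
    (fun w => G.dist v w)
  exact ⟨w, hw⟩

lemma dist_iso_le (hG : G.Connected) (φ : G ≃g G) (u v : V) :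
    G.dist (φ u) (φ v) ≤ G.dist u v := by
  obtain ⟨p, hp⟩ := hG.exists_walk_length_eq_dist u v
  calc G.dist (φ u) (φ v) ≤ (p.map φ.toHom).length := SimpleGraph.dist_le _
    _ = G.dist u v := by rw [Walk.length_map, hp]

lemma dist_iso (hG : G.Connected) (φ : G ≃g G) (u v : V) :
    G.dist (φ u) (φ v) = G.dist u v := by
  refine le_antisymm (dist_iso_le hG φ u v) ?_
  have := dist_iso_le hG φ.symm (φ u) (φ v)
  simpa using this

lemma ecc_iso (hG : G.Connected) (φ : G ≃g G) (v : V) : ecc G (φ v) = ecc G v := by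
  have key : ∀ (ψ : G ≃g G) (x : V), ecc G (ψ x) ≤ ecc G x := by
    intro ψ x
    refine Finset.sup_le fun w _ => ?_
    have : G.dist (ψ x) w = G.dist x (ψ.symm w) := by
      conv_lhs => rw [← ψ.apply_symm_apply w]
      exact dist_iso hG ψ x (ψ.symm w)
    rw [this]; exact dist_le_ecc _ _
  refine le_antisymm (key φ v) ?_
  have := key φ.symm (φ v)
  simpa using this

/-- In a tree, every path realizes the distance. -/
lemma path_length_eq_dist (hG : G.IsTree) {u v : V} (p : G.Walk u v) (hp : p.IsPath) :
    p.length = G.dist u v := by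
  obtain ⟨q, hq, hql⟩ := hG.isConnected.exists_path_of_dist u v
  have : (⟨p, hp⟩ : G.Path u v) = ⟨q, hq⟩ := hG.IsAcyclic.path_unique _ _
  rw [show p = q from congrArg Subtype.val this, hql]

lemma dist_add_of_mem_geodesic (hG : G.IsTree) {u v y : V} (p : G.Walk u v)
    (hl : p.length = G.dist u v) (hy : y ∈ p.support) :
    G.dist u y + G.dist y v = G.dist u v := by
  classical
  have hsplit := congrArg Walk.length (p.take_spec hy)
  rw [Walk.length_append] at hsplit
  have h1 : G.dist u y ≤ (p.takeUntil y hy).length := SimpleGraph.dist_le _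
  have h2 : G.dist y v ≤ (p.dropUntil y hy).length := SimpleGraph.dist_le _
  have h3 := hG.isConnected.dist_triangle (u := u) (v := y) (w := v)
  omega

/-- Parity/uniqueness: in a tree distances from adjacent vertices differ by exactly 1. -/
lemma adj_dist_cases (hG : G.IsTree) {u v : V} (h : G.Adj u v) (w : V) :
    G.dist u w = G.dist v w + 1 ∨ G.dist v w = G.dist u w + 1 := by
  have conn := hG.isConnected
  have duv : G.dist u v = 1 := SimpleGraph.dist_eq_one_iff_adj.mpr h
  have dvu : G.dist v u = 1 := SimpleGraph.dist_eq_one_iff_adj.mpr h.symm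
  have tri1 : G.dist u w ≤ 1 + G.dist v w := by
    have := conn.dist_triangle (u := u) (v := v) (w := w); omega
  have tri2 : G.dist v w ≤ 1 + G.dist u w := by
    have := conn.dist_triangle (u := v) (v := u) (w := w); omega
  have hne : G.dist u w ≠ G.dist v w := by
    intro heq
    obtain ⟨p, hp, hpl⟩ := conn.exists_path_of_dist u w
    have hv : v ∉ p.support := by
      intro hv
      have := dist_add_of_mem_geodesic hG p hpl hv
      rw [duv] at this
      omega
    have hq : (Walk.cons h.symm p).IsPath := hp.cons hv
    have := path_length_eq_dist hG _ hq
    rw [Walk.length_cons, hpl] at this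
    omega
  omega


lemma ecc_le_of_adj (hG : G.IsTree) {u v : V} (h : G.Adj u v) :
    ecc G v ≤ ecc G u + 1 := by
  refine Finset.sup_le fun w _ => ?_
  have tri := hG.isConnected.dist_triangle (u := v) (v := u) (w := w)
  have dvu : G.dist v u = 1 := SimpleGraph.dist_eq_one_iff_adj.mpr h.symm
  have := dist_le_ecc (G := G) u w
  omega

/-- F2: a vertex has at most one neighbor of no-larger eccentricity. -/
lemma unique_small_nbr (hG : G.IsTree) {v u1 u2 : V}
    (h1 : G.Adj v u1) (h2 : G.Adj v u2)
    (e1 : ecc G u1 ≤ ecc G v) (e2 : ecc G u2 ≤ ecc G v) : u1 = u2 := by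
  classical
  have : Nonempty V := ⟨v⟩
  have conn := hG.isConnected
  obtain ⟨w, hw⟩ := exists_ecc (G := G) v
  have key : ∀ u : V, G.Adj v u → ecc G u ≤ ecc G v →
      ∃ q : G.Walk u w, q.IsPath ∧ v ∉ q.support := by
    intro u hu he
    have hduw : G.dist v w = G.dist u w + 1 := by
      rcases adj_dist_cases hG hu w with hc | hc
      · exact hc
      · -- dist u w = dist v w + 1 contradicts ecc u ≤ ecc v
        exfalso
        have h3 : G.dist u w ≤ ecc G u := dist_le_ecc _ _
        omega
    obtain ⟨q, hq, hql⟩ := conn.exists_path_of_dist u w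
    have hv : v ∉ q.support := by
      intro hv
      have := dist_add_of_mem_geodesic hG q hql hv
      have dvu : G.dist u v = 1 := SimpleGraph.dist_eq_one_iff_adj.mpr hu.symm
      omega
    exact ⟨q, hq, hv⟩
  obtain ⟨q1, hq1, hv1⟩ := key u1 h1 e1
  obtain ⟨q2, hq2, hv2⟩ := key u2 h2 e2
  have hp1 : (Walk.cons h1 q1).IsPath := hq1.cons hv1
  have hp2 : (Walk.cons h2 q2).IsPath := hq2.cons hv2
  have heq : (⟨Walk.cons h1 q1, hp1⟩ : G.Path v w) = ⟨Walk.cons h2 q2, hp2⟩ :=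
    hG.IsAcyclic.path_unique _ _
  have hwalks : Walk.cons h1 q1 = Walk.cons h2 q2 := congrArg Subtype.val heq
  have hsup := congrArg Walk.support hwalks
  rw [Walk.support_cons, Walk.support_cons] at hsup
  have hsup' : q1.support = q2.support := by simpa using hsup
  rw [q1.support_eq_cons, q2.support_eq_cons] at hsup'
  exact (List.cons.injEq _ _ _ _ ▸ hsup').1

/-- ecc strictly grows along a path moving away from a smaller-ecc neighbor. -/
lemma grow (hG : G.IsTree) : ∀ {a b : V} (p : G.Walk a b), p.IsPath →
    ∀ pre, G.Adj pre a → pre ∉ p.support → ecc G pre < ecc G a →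
    ecc G a + p.length ≤ ecc G b := by
  intro a b p
  induction p with
  | nil => simp
  | @cons a x b hadj q ih =>
    intro hp pre hpre hmem hlt
    have hqp : q.IsPath := hp.of_cons
    have hanot : a ∉ q.support := (Walk.cons_isPath_iff _ _).mp hp |>.2
    have hxne : x ≠ pre := by
      intro hx
      apply hmem
      rw [Walk.support_cons]
      exact List.mem_cons_of_mem _ (hx ▸ q.start_mem_support)
    have hgt : ecc G a < ecc G x := by
      by_contra hle
      push_neg at hle
      exact hxne (unique_small_nbr hG hadj hpre.symm hle (le_of_lt hlt))
    have := ih hqp a hadj hanot hgt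
    rw [Walk.length_cons]
    omega


/-- The radius: minimum eccentricity. -/
noncomputable def eccMin (G : SimpleGraph V) : ℕ := sInf (Set.range (ecc G))

lemma eccMin_le (v : V) : eccMin G ≤ ecc G v := Nat.sInf_le ⟨v, rfl⟩

lemma exists_eccMin [Nonempty V] (G : SimpleGraph V) : ∃ c, ecc G c = eccMin G := by
  have : eccMin G ∈ Set.range (ecc G) := Nat.sInf_mem (Set.range_nonempty _)
  exact this

/-- F3: every non-central vertex has a neighbor of eccentricity one less. -/
lemma exists_parent_aux (hG : G.IsTree) {v : V} (hv : eccMin G < ecc G v) :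
    ∃ u, G.Adj v u ∧ ecc G u + 1 = ecc G v := by
  classical
  have conn := hG.isConnected
  have : Nonempty V := conn.nonempty
  obtain ⟨c, hc⟩ := exists_eccMin G
  obtain ⟨w, hw⟩ := exists_ecc (G := G) v
  set m := eccMin G with hm
  set k := ecc G v with hkdef
  have hk1 : 1 ≤ k := by omega
  have hvw : v ≠ w := by
    intro h; subst h; rw [SimpleGraph.dist_self] at hw; omega
  obtain ⟨p, hp, hpl⟩ := conn.exists_path_of_dist v w
  obtain ⟨u, hadj, p', rfl⟩ := Walk.exists_eq_cons_of_ne hvw p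
  have hp' : p'.IsPath := hp.of_cons
  have hvp' : v ∉ p'.support := ((Walk.cons_isPath_iff _ _).mp hp).2
  have hlen : p'.length + 1 = k := by
    have := hpl; rw [Walk.length_cons] at this; omega
  have hduw : G.dist u w + 1 = k := by
    have := path_length_eq_dist hG p' hp'; omega
  have hkey : ecc G u + 1 ≤ k := by
    by_contra hbig
    push_neg at hbig
    obtain ⟨x, hx⟩ := exists_ecc (G := G) u
    have hdux : k ≤ G.dist u x := by omega
    have hdvx : G.dist u x = G.dist v x + 1 := by
      rcases adj_dist_cases hG hadj x with hcs | hcs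
      · exfalso
        have : G.dist v x ≤ k := dist_le_ecc _ _
        omega
      · exact hcs
    obtain ⟨q, hq, hql⟩ := conn.exists_path_of_dist v x
    have hunq : u ∉ q.support := by
      intro hu
      have := dist_add_of_mem_geodesic hG q hql hu
      have hdvu : G.dist v u = 1 := SimpleGraph.dist_eq_one_iff_adj.mpr hadj
      omega
    have hshare : ∀ y, y ∈ (Walk.cons hadj p').support → y ∈ q.support → y = v := by
      intro y hyp hyq
      by_contra hyv
      have hp1 : ((Walk.cons hadj p').takeUntil y hyp).IsPath := hp.takeUntil _
      have hq1 : (q.takeUntil y hyq).IsPath := hq.takeUntil _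
      have heq : (Walk.cons hadj p').takeUntil y hyp = q.takeUntil y hyq := by
        have := hG.IsAcyclic.path_unique
          (⟨(Walk.cons hadj p').takeUntil y hyp, hp1⟩ : G.Path v y) ⟨q.takeUntil y hyq, hq1⟩
        exact congrArg Subtype.val this
      have hu_mem : u ∈ (Walk.cons hadj p').support := by
        rw [Walk.support_cons]
        exact List.mem_cons_of_mem _ p'.start_mem_support
      have hu_mem' : u ∈ (((Walk.cons hadj p').takeUntil y hyp).append
          ((Walk.cons hadj p').dropUntil y hyp)).support := by
        rw [Walk.take_spec]; exact hu_mem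
      rcases (Walk.mem_support_append_iff _ _).mp hu_mem' with h1 | h2
      · exact hunq (Walk.support_takeUntil_subset _ _ (heq ▸ h1))
      · -- u in the dropUntil part: derive y = u
        have hsplit := congrArg Walk.length ((Walk.cons hadj p').take_spec hyp)
        rw [Walk.length_append, Walk.length_cons] at hsplit
        have hl1 : G.dist v y ≤ ((Walk.cons hadj p').takeUntil y hyp).length :=
          SimpleGraph.dist_le _
        have hl2 : G.dist y w ≤ ((Walk.cons hadj p').dropUntil y hyp).length :=
          SimpleGraph.dist_le _
        have hsum : G.dist v y + G.dist y w = k :=  by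
          have := dist_add_of_mem_geodesic hG (Walk.cons hadj p') hpl hyp
          omega
        have hl2' : ((Walk.cons hadj p').dropUntil y hyp).length = G.dist y w := by omega
        have hdz := dist_add_of_mem_geodesic hG _ hl2' h2
        have hvy : 1 ≤ G.dist v y := by
          have := conn.pos_dist_of_ne (Ne.symm hyv)
          omega
        have hyu : G.dist y u = 0 := by omega
        have : y = u := (conn.dist_eq_zero_iff).mp hyu
        exact hunq (this ▸ hyq)
    -- now the appended walk is a path
    set r := (Walk.cons hadj p').reverse.append q with hr_def
    have hr : r.IsPath := by
      rw [Walk.isPath_def, Walk.support_append, Walk.support_reverse]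
      apply List.Nodup.append
      · exact List.nodup_reverse.mpr hp.support_nodup
      · exact hq.support_nodup.tail
      · intro y hy1 hy2
        have hy1' : y ∈ (Walk.cons hadj p').support := List.mem_reverse.mp hy1
        have hy2' : y ∈ q.support := List.mem_of_mem_tail hy2
        have hveq : y = v := hshare y hy1' hy2'
        have hvt : v ∉ q.support.tail := by
          have hnd := hq.support_nodup
          rw [q.support_eq_cons] at hnd
          exact (List.nodup_cons.mp hnd).1
        exact hvt (hveq ▸ hy2)
    have hrl := path_length_eq_dist hG r hr
    have hrlen : r.length = k + G.dist v x := by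
      rw [hr_def, Walk.length_append, Walk.length_reverse, Walk.length_cons, hql]
      omega
    have htri := conn.dist_triangle (u := w) (v := c) (w := x)
    have h1 : G.dist w c ≤ m := by
      rw [SimpleGraph.dist_comm]; rw [← hc]; exact dist_le_ecc _ _
    have h2 : G.dist c x ≤ m := by rw [← hc]; exact dist_le_ecc _ _
    omega
  have hup : k ≤ ecc G u + 1 := ecc_le_of_adj hG hadj.symm
  exact ⟨u, hadj, by omega⟩

/-- Central vertices are equal or adjacent. -/
lemma center_adj_or_eq (hG : G.IsTree) {c1 c2 : V}
    (h1 : ecc G c1 = eccMin G) (h2 : ecc G c2 = eccMin G) : c1 = c2 ∨ G.Adj c1 c2 := by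
  classical
  have conn := hG.isConnected
  set m := eccMin G with hm
  have main : ∀ d : ℕ, ∀ c1 c2 : V, ecc G c1 = m → ecc G c2 = m →
      G.dist c1 c2 = d → c1 = c2 ∨ G.Adj c1 c2 := by
    intro d
    induction d using Nat.strong_induction_on with
    | _ d ih =>
      intro c1 c2 h1 h2 hd
      by_cases hc : c1 = c2
      · exact Or.inl hc
      by_cases hadj : G.Adj c1 c2
      · exact Or.inr hadj
      exfalso
      have hd0 : d ≠ 0 := by
        intro h; subst h
        exact hc ((conn.dist_eq_zero_iff).mp hd)
      have hd1 : d ≠ 1 := by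
        intro h; subst h
        exact hadj (SimpleGraph.dist_eq_one_iff_adj.mp hd)
      obtain ⟨p, hp, hpl⟩ := conn.exists_path_of_dist c1 c2
      obtain ⟨x, hx1, p', rfl⟩ := Walk.exists_eq_cons_of_ne hc p
      have hp' : p'.IsPath := hp.of_cons
      have hc1mem : c1 ∉ p'.support := ((Walk.cons_isPath_iff _ _).mp hp).2
      have hplen : p'.length + 1 = d := by
        have := hpl; rw [Walk.length_cons] at this; omega
      have hdxc2 : G.dist x c2 = d - 1 := by
        have := path_length_eq_dist hG p' hp'; omega
      have hxm : m ≤ ecc G x := eccMin_le x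
      rcases eq_or_lt_of_le hxm with hxe | hxl
      · -- ecc x = m, recurse
        rcases ih (d-1) (by omega) x c2 hxe.symm h2 hdxc2 with hxc | hxc
        · have : G.dist x c2 = 0 := by rw [hxc]; exact SimpleGraph.dist_self
          omega
        · have : G.dist x c2 = 1 := SimpleGraph.dist_eq_one_iff_adj.mpr hxc
          have hd2 : d = 2 := by omega
          have := unique_small_nbr hG (v := x) hx1.symm hxc
            (by rw [h1, hxe]) (by rw [h2, hxe])
          exact hc this
      · -- ecc x > m : grow along p'
        have := grow hG p' hp' c1 hx1 hc1mem (by omega)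
        have h2' : ecc G c2 = m := h2
        omega
  exact main (G.dist c1 c2) c1 c2 h1 h2 rfl

/-- The center has at most two elements. -/
lemma center_two (hG : G.IsTree) {c1 c2 c3 : V} (hne : c1 ≠ c2)
    (h1 : ecc G c1 = eccMin G) (h2 : ecc G c2 = eccMin G) (h3 : ecc G c3 = eccMin G) :
    c3 = c1 ∨ c3 = c2 := by
  by_contra h
  push_neg at h
  obtain ⟨ha, hb⟩ := h
  rcases center_adj_or_eq hG h3 h1 with h | hadj1
  · exact ha h
  rcases center_adj_or_eq hG h3 h2 with h | hadj2
  · exact hb h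
  exact hne (unique_small_nbr hG hadj1 hadj2 (by rw [h1, h3]) (by rw [h2, h3]))



open Classical in
/-- The canonical neighbor of `v` of one smaller eccentricity (junk if none). -/
noncomputable def parent (G : SimpleGraph V) (v : V) : V :=
  if h : ∃ u, G.Adj v u ∧ ecc G u + 1 = ecc G v then h.choose else v

lemma parent_spec (hG : G.IsTree) {v : V} (hv : eccMin G < ecc G v) :
    G.Adj v (parent G v) ∧ ecc G (parent G v) + 1 = ecc G v := by
  classical
  have h := exists_parent_aux hG hv
  rw [parent, dif_pos h]
  exact h.choose_spec

lemma parent_unique (hG : G.IsTree) {v u : V} (hv : eccMin G < ecc G v)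
    (h : G.Adj v u) (he : ecc G u ≤ ecc G v) : u = parent G v := by
  have hs := parent_spec hG hv
  exact unique_small_nbr hG h hs.1 he (by omega)

lemma parent_iso (hG : G.IsTree) (φ : G ≃g G) {v : V} (hv : eccMin G < ecc G v) :
    φ (parent G v) = parent G (φ v) := by
  have conn := hG.isConnected
  have hv' : eccMin G < ecc G (φ v) := by rw [ecc_iso conn φ v]; exact hv
  have hs := parent_spec hG hv
  refine parent_unique hG hv' (φ.map_adj_iff.mpr hs.1) ?_
  rw [ecc_iso conn φ (parent G v), ecc_iso conn φ v]
  omega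

/-- Vertex orbit map. -/
def O (G : SimpleGraph V) : V → Set V := fun v => {w | ∃ φ : G ≃g G, φ v = w}

/-- Edge orbit map. -/
def OE (G : SimpleGraph V) : Sym2 V → Set (Sym2 V) :=
  fun e => {e' | ∃ φ : G ≃g G, Sym2.map (⇑φ) e = e'}

lemma mem_O_self (v : V) : v ∈ O G v := ⟨RelIso.refl G.Adj, rfl⟩

lemma O_eq_of_mem {v w : V} (h : w ∈ O G v) : O G v = O G w := by
  obtain ⟨φ, hφ⟩ := h
  ext x
  constructor
  · rintro ⟨ψ, rfl⟩
    exact ⟨φ.symm.trans ψ, by simp [← hφ]⟩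
  · rintro ⟨ψ, rfl⟩
    exact ⟨φ.trans ψ, by simp [← hφ]⟩

lemma mem_OE_self (e : Sym2 V) : e ∈ OE G e := ⟨RelIso.refl G.Adj, by
  have : ⇑(RelIso.refl G.Adj) = (id : V → V) := rfl
  rw [this, Sym2.map_id]; rfl⟩

lemma OE_map_mem (φ : G ≃g G) (e : Sym2 V) : Sym2.map (⇑φ) e ∈ OE G e := ⟨φ, rfl⟩

lemma OE_eq_of_mem {e f : Sym2 V} (h : f ∈ OE G e) : OE G e = OE G f := by
  obtain ⟨φ, hφ⟩ := h
  have key : ∀ (ψ : G ≃g G) (x : Sym2 V), Sym2.map (⇑ψ) x = Sym2.map (⇑ψ) x := fun _ _ => rfl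
  ext x
  constructor
  · rintro ⟨ψ, rfl⟩
    refine ⟨φ.symm.trans ψ, ?_⟩
    rw [← hφ]
    rw [Sym2.map_map]
    congr 1
    ext z
    simp
  · rintro ⟨ψ, rfl⟩
    refine ⟨φ.trans ψ, ?_⟩
    rw [← hφ, Sym2.map_map]
    rfl

lemma O_ecc (hG : G.Connected) {v w : V} (h : w ∈ O G v) : ecc G w = ecc G v := by
  obtain ⟨φ, rfl⟩ := h
  exact ecc_iso hG φ v

/-- Counting helper: images have equal cardinality when the kernels agree. -/
lemma ncard_image_eq_of_iff {α β γ : Type*} (f : α → β) (g : α → γ) (s : Set α)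
    (h : ∀ x ∈ s, ∀ y ∈ s, (f x = f y ↔ g x = g y)) :
    (f '' s).ncard = (g '' s).ncard := by
  classical
  rw [← Nat.card_coe_set_eq, ← Nat.card_coe_set_eq]
  have pick : ∀ b : ↥(f '' s), {a : α // a ∈ s ∧ f a = ↑b} := by
    rintro ⟨b, hb⟩
    exact ⟨hb.choose, hb.choose_spec⟩
  refine Nat.card_eq_of_bijective
    (fun b => ⟨g (pick b).1, ⟨(pick b).1, (pick b).2.1, rfl⟩⟩) ⟨?_, ?_⟩
  · rintro b1 b2 hb
    have h1 := (pick b1).2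
    have h2 := (pick b2).2
    have : g (pick b1).1 = g (pick b2).1 := congrArg Subtype.val hb
    have := (h (pick b1).1 h1.1 (pick b2).1 h2.1).mpr this
    ext
    rw [← h1.2, ← h2.2, this]
  · rintro ⟨c, hc⟩
    obtain ⟨x, hx, rfl⟩ := hc
    refine ⟨⟨f x, ⟨x, hx, rfl⟩⟩, ?_⟩
    have hp := (pick ⟨f x, ⟨x, hx, rfl⟩⟩).2
    have : g (pick ⟨f x, ⟨x, hx, rfl⟩⟩).1 = g x :=
      (h _ hp.1 x hx).mp hp.2
    exact Subtype.ext this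



lemma edge_classify (hG : G.IsTree) {u v : V} (h : G.Adj u v) :
    (ecc G u = eccMin G ∧ ecc G v = eccMin G) ∨
    (eccMin G < ecc G v ∧ u = parent G v) ∨
    (eccMin G < ecc G u ∧ v = parent G u) := by
  rcases lt_trichotomy (ecc G u) (ecc G v) with hlt | heq | hgt
  · have hv : eccMin G < ecc G v := lt_of_le_of_lt (eccMin_le u) hlt
    exact Or.inr (Or.inl ⟨hv, parent_unique hG hv h.symm (le_of_lt hlt)⟩)
  · by_cases hum : ecc G u = eccMin G
    · exact Or.inl ⟨hum, heq ▸ hum⟩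
    · exfalso
      have hu : eccMin G < ecc G u := lt_of_le_of_ne (eccMin_le u) (Ne.symm hum)
      have := parent_unique hG hu h (le_of_eq heq.symm)
      have hs := parent_spec hG hu
      rw [← this] at hs
      omega
  · have hu : eccMin G < ecc G u := lt_of_le_of_lt (eccMin_le v) hgt
    exact Or.inr (Or.inr ⟨hu, parent_unique hG hu h (le_of_lt hgt)⟩)

lemma parent_edge_not_symmetric (hG : G.IsTree) {v : V} (hv : eccMin G < ecc G v) :
    ¬ IsSymmetricEdge G s(parent G v, v) := by
  rintro ⟨φ, a, b, he, hab, hba⟩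
  have hs := parent_spec hG hv
  have key : ecc G (parent G v) = ecc G v := by
    rcases Sym2.eq_iff.mp he with ⟨h1, h2⟩ | ⟨h1, h2⟩
    · -- parent v = a, v = b ; φ a = b, φ b = a
      subst h1; subst h2
      rw [← hba, ecc_iso hG.isConnected]
    · -- parent v = b, v = a
      subst h1; subst h2
      rw [← hab, ecc_iso hG.isConnected]
  omega

theorem otter_main (hG : G.IsTree)
    (hVdef : vertexOrbits G = Set.range (O G))
    (hEdef : nonSymmetricEdgeOrbits G = OE G '' {e ∈ G.edgeSet | ¬ IsSymmetricEdge G e}) :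
    (vertexOrbits G).ncard = (nonSymmetricEdgeOrbits G).ncard + 1 := by
  classical
  have conn := hG.isConnected
  have : Nonempty V := conn.nonempty
  obtain ⟨c, hc⟩ := exists_eccMin G
  set m := eccMin G with hm
  set C : Set V := {v | ecc G v = m} with hC
  set NC : Set V := {v | ecc G v ≠ m} with hNC
  have hNClt : ∀ v ∈ NC, m < ecc G v := by
    intro v hv
    have := eccMin_le (G := G) v
    have hne : ecc G v ≠ m := hv
    omega
  -- vertex orbit count decomposition
  have hCU : (Set.univ : Set V) = C ∪ NC := by
    ext v; by_cases hv : ecc G v = m <;> simp [hC, hNC, hv]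
  have himg : vertexOrbits G = O G '' C ∪ O G '' NC := by
    rw [hVdef, ← Set.image_univ, hCU, Set.image_union]
  have hdisj : Disjoint (O G '' C) (O G '' NC) := by
    rw [Set.disjoint_left]
    rintro S ⟨a, ha, rfl⟩ ⟨b, hb, hS⟩
    have hmem : b ∈ O G a := hS ▸ mem_O_self b
    have : ecc G b = ecc G a := O_ecc conn hmem
    have ha' : ecc G a = m := ha
    have hb' : ecc G b ≠ m := hb
    omega
  have hcard1 : (vertexOrbits G).ncard = (O G '' C).ncard + (O G '' NC).ncard := by
    rw [himg, Set.ncard_union_eq hdisj (Set.toFinite _) (Set.toFinite _)]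
  -- the non-central edge ↔ vertex correspondence
  set eFun : V → Sym2 V := fun v => s(parent G v, v) with heFun
  have hker : ∀ x ∈ NC, ∀ y ∈ NC, (OE G (eFun x) = OE G (eFun y) ↔ O G x = O G y) := by
    intro x hx y hy
    have hx' := hNClt x hx
    have hy' := hNClt y hy
    constructor
    · intro hOE
      have : eFun y ∈ OE G (eFun x) := hOE ▸ mem_OE_self (eFun y)
      obtain ⟨φ, hφ⟩ := this
      rw [heFun] at hφ
      simp only [Sym2.map_pair_eq] at hφ
      rcases Sym2.eq_iff.mp hφ with ⟨h1, h2⟩ | ⟨h1, h2⟩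
      · exact O_eq_of_mem ⟨φ, h2⟩
      · exfalso
        have e1 : ecc G (φ (parent G x)) = ecc G (parent G x) := ecc_iso conn _ _
        have e2 : ecc G (φ x) = ecc G x := ecc_iso conn _ _
        rw [h1] at e1
        rw [h2] at e2
        have s1 := (parent_spec hG hx').2
        have s2 := (parent_spec hG hy').2
        omega
    · intro hO
      have : y ∈ O G x := hO ▸ mem_O_self y
      obtain ⟨φ, hφ⟩ := this
      refine OE_eq_of_mem ⟨φ, ?_⟩
      rw [heFun]
      simp only [Sym2.map_pair_eq]
      rw [parent_iso hG φ hx', hφ]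
  have hEA : (OE G '' (eFun '' NC)) = (fun v => OE G (eFun v)) '' NC := by
    rw [Set.image_image]
  have hXY : ((fun v => OE G (eFun v)) '' NC).ncard = (O G '' NC).ncard :=
    ncard_image_eq_of_iff _ _ NC hker
  -- membership facts about parent edges
  have heFunEdge : ∀ v ∈ NC, eFun v ∈ G.edgeSet ∧ ¬ IsSymmetricEdge G (eFun v) := by
    intro v hv
    have hv' := hNClt v hv
    exact ⟨G.mem_edgeSet.mpr (parent_spec hG hv').1.symm, parent_edge_not_symmetric hG hv'⟩
  -- case split on the center
  by_cases hCsing : ∀ c', ecc G c' = m → c' = c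
  · -- single central vertex
    have hNSE : {e ∈ G.edgeSet | ¬ IsSymmetricEdge G e} = eFun '' NC := by
      ext e
      constructor
      · rintro ⟨he, hns⟩
        induction e using Sym2.ind with
        | _ u v =>
          have hadj : G.Adj u v := G.mem_edgeSet.mp he
          rcases edge_classify hG hadj with ⟨h1, h2⟩ | ⟨h1, h2⟩ | ⟨h1, h2⟩
          · exfalso
            have := hCsing u h1
            have := hCsing v h2
            exact hadj.ne (by rw [‹u = c›, ‹v = c›])
          · exact ⟨v, by intro hh; exact absurd hh (by omega), by rw [heFun, h2]⟩
          · refine ⟨u, by intro hh; exact absurd hh (by omega), ?_⟩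
            rw [heFun, h2]
            exact Sym2.eq_swap.symm
      · rintro ⟨v, hv, rfl⟩
        exact heFunEdge v hv
    have hCc : C = {c} := by
      ext v
      constructor
      · intro hv; exact hCsing v hv
      · rintro rfl; exact hc
    have hOC : (O G '' C).ncard = 1 := by
      rw [hCc, Set.image_singleton, Set.ncard_singleton]
    rw [hcard1, hOC, hEdef, hNSE, hEA, hXY]
    omega
  · push_neg at hCsing
    obtain ⟨c2, hc2, hc2ne⟩ := hCsing
    have hadj12 : G.Adj c c2 := by
      rcases center_adj_or_eq hG hc hc2 with h | h
      · exact absurd h.symm hc2ne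
      · exact h
    have hCpair : C = {c, c2} := by
      ext v
      constructor
      · intro hv
        rcases center_two hG (Ne.symm hc2ne) hc hc2 hv with h | h
        · exact Or.inl h
        · exact Or.inr h
      · rintro (rfl | rfl)
        · exact hc
        · exact hc2
    set e0 : Sym2 V := s(c, c2) with he0
    have he0edge : e0 ∈ G.edgeSet := G.mem_edgeSet.mpr hadj12
    -- classification of nonsymmetric edges
    have hNSEsub : ∀ e, e ∈ G.edgeSet → ¬ IsSymmetricEdge G e →
        e = e0 ∨ e ∈ eFun '' NC := by
      intro e he hns
      induction e using Sym2.ind with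
      | _ u v =>
        have hadj : G.Adj u v := G.mem_edgeSet.mp he
        rcases edge_classify hG hadj with ⟨h1, h2⟩ | ⟨h1, h2⟩ | ⟨h1, h2⟩
        · left
          have hu : u ∈ C := h1
          have hv : v ∈ C := h2
          rw [hCpair] at hu hv
          rcases hu with rfl | rfl <;> rcases hv with rfl | rfl
          · exact absurd rfl hadj.ne
          · rfl
          · exact Sym2.eq_swap
          · exact absurd rfl hadj.ne
        · right; exact ⟨v, by intro hh; exact absurd hh (by omega), by rw [heFun, h2]⟩
        · right
          refine ⟨u, by intro hh; exact absurd hh (by omega), ?_⟩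
          rw [heFun, h2]
          exact Sym2.eq_swap.symm
    by_cases hsym : IsSymmetricEdge G e0
    · -- symmetric central edge
      have hNSE : {e ∈ G.edgeSet | ¬ IsSymmetricEdge G e} = eFun '' NC := by
        ext e
        constructor
        · rintro ⟨he, hns⟩
          rcases hNSEsub e he hns with rfl | h
          · exact absurd hsym hns
          · exact h
        · rintro ⟨v, hv, rfl⟩
          exact heFunEdge v hv
      -- O c = O c2
      obtain ⟨φ, a, b, hab, h1, h2⟩ := hsym
      have hswap : ∃ ψ : G ≃g G, ψ c = c2 := by
        rcases Sym2.eq_iff.mp hab with ⟨ha, hb⟩ | ⟨ha, hb⟩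
        · exact ⟨φ, by rw [ha, hb]; exact h1⟩
        · exact ⟨φ, by rw [ha, hb]; exact h2⟩
      have hOeq : O G c = O G c2 := O_eq_of_mem hswap
      have hOC : (O G '' C).ncard = 1 := by
        rw [hCpair, Set.image_pair, hOeq, Set.pair_eq_singleton, Set.ncard_singleton]
      rw [hcard1, hOC, hEdef, hNSE, hEA, hXY]
      omega
    · -- nonsymmetric central edge
      have hNSE : {e ∈ G.edgeSet | ¬ IsSymmetricEdge G e} = insert e0 (eFun '' NC) := by
        ext e
        constructor
        · rintro ⟨he, hns⟩
          rcases hNSEsub e he hns with rfl | h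
          · exact Set.mem_insert _ _
          · exact Set.mem_insert_of_mem _ h
        · rintro (rfl | ⟨v, hv, rfl⟩)
          · exact ⟨he0edge, hsym⟩
          · exact heFunEdge v hv
      have hOC2 : (O G '' C).ncard = 2 := by
        rw [hCpair, Set.image_pair]
        refine Set.ncard_pair ?_
        intro hOeq
        have hmem : c2 ∈ O G c := hOeq.symm ▸ mem_O_self c2
        obtain ⟨φ, hφ⟩ := hmem
        have hφ2 : φ c2 ∈ C := by
          have : ecc G (φ c2) = m := by rw [ecc_iso conn]; exact hc2
          exact this
        rw [hCpair] at hφ2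
        rcases hφ2 with h | h
        · exact hsym ⟨φ, c, c2, he0, hφ, h⟩
        · exact hc2ne (φ.toEquiv.injective (h.trans hφ.symm))
      have hnotmem : OE G e0 ∉ OE G '' (eFun '' NC) := by
        rintro ⟨f, ⟨v, hv, rfl⟩, hOEeq⟩
        have : e0 ∈ OE G (eFun v) := hOEeq ▸ mem_OE_self e0
        obtain ⟨φ, hφ⟩ := this
        rw [heFun] at hφ
        simp only [Sym2.map_pair_eq] at hφ
        have hv' := hNClt v hv
        have e2 : ecc G (φ v) = ecc G v := ecc_iso conn _ _
        rcases Sym2.eq_iff.mp hφ with ⟨h1', h2'⟩ | ⟨h1', h2'⟩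
        · rw [h2'] at e2; rw [hc2] at e2; omega
        · rw [h2'] at e2; rw [hc] at e2; omega
      have hcount : (nonSymmetricEdgeOrbits G).ncard = (O G '' NC).ncard + 1 := by
        rw [hEdef, hNSE, Set.image_insert_eq,
          Set.ncard_insert_of_notMem hnotmem (Set.toFinite _), hEA, hXY]
      rw [hcard1, hOC2, hcount]
      omega


end OtterProof

end OtterAux

/-- Otter's dissimilarity characteristic: in any tree, the number of
dissimilarity classes of vertices exceeds the number of dissimilarity classes
of non-symmetric edges by exactly one. -/
theorem otter_dissimilarity {V : Type*} [Fintype V] (G : SimpleGraph V)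
    (hG : G.IsTree) :
    (vertexOrbits G).ncard = (nonSymmetricEdgeOrbits G).ncard + 1 := by
  exact OtterProof.otter_main hG rfl rfl
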